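/- Let X be a Tychonoff (completely regular Hausdorff) topological space and let 𝓕 be a family of compact subsets of X with ⋃𝓕 = X, such that every function f : X → ℝ (equivalently, → ℂ) whose restriction to each member of 𝓕 is continuous is continuous on X (i.e. 𝓕 is strongly functionally generating). Equip the commutative unital *-algebra C(X, ℂ) of continuous complex-valued functions on X with the topology of uniform convergence on the members of 𝓕, given by the seminorms p_F(f) = sup_{x ∈ F} |f(x)| for F ∈ 𝓕. Then the evaluation map X → Δ(C(X,ℂ)), x ↦ (f ↦ f(x)), is a homeomorphism of X onto the space Δ(C(X,ℂ)) of nonzero continuous algebra homomorphisms C(X,ℂ) → ℂ, equipped with the topology of pointwise convergence (weak-* topology). -/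

import Mathlib

set_option maxHeartbeats 1000000
set_option synthInstance.maxHeartbeats 400000


open scoped ENNReal

/-- The sup-seminorm `p_F(f) = sup_{x ∈ F} |f x|` on `C(X, ℂ)` associated with a subset
`F ⊆ X`. -/
noncomputable def supSeminorm {X : Type*} [TopologicalSpace X] (F : Set X)
    (f : C(X, ℂ)) : ℝ :=
  ⨆ x ∈ F, ‖f x‖

/-- The character space `Δ(C_𝓕(X))` of the algebra `C(X, ℂ)` endowed with the topology of
uniform convergence on the members of `𝓕`: the set of nonzero multiplicative linear
functionals `χ : C(X, ℂ) → ℂ` that are continuous for that topology, i.e. dominated by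
`r · max(p_{F₁}, …, p_{F_l})` for finitely many `F₁, …, F_l ∈ 𝓕` and some `r > 0`.
It carries the weak-* (pointwise convergence) topology as a subset of the product
`C(X, ℂ) → ℂ`. -/
noncomputable def characterSpace𝓕 (X : Type*) [TopologicalSpace X] (𝓕 : Set (Set X)) :
    Set (C(X, ℂ) → ℂ) :=
  {χ | χ ≠ 0 ∧
    (∀ f g : C(X, ℂ), χ (f + g) = χ f + χ g) ∧
    (∀ (c : ℂ) (f : C(X, ℂ)), χ (c • f) = c * χ f) ∧
    (∀ f g : C(X, ℂ), χ (f * g) = χ f * χ g) ∧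
    ∃ (S : Finset (Set X)) (r : ℝ), ↑S ⊆ 𝓕 ∧ 0 < r ∧
      ∀ f : C(X, ℂ), ‖χ f‖ ≤ r * ⨆ F ∈ (S : Set (Set X)), supSeminorm F f}

lemma real_le_biSup {ι : Type*} (g : ι → ℝ) {s : Set ι} (hs : s.Finite)
    (hg : ∀ j, 0 ≤ g j) {i : ι} (hi : i ∈ s) : g i ≤ ⨆ j ∈ s, g j := by
  have hbdd : BddAbove (Set.range fun j => ⨆ _ : j ∈ s, g j) := by
    apply Set.Finite.bddAbove
    apply Set.Finite.subset (Set.Finite.insert 0 (hs.image g))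
    rintro x ⟨j, rfl⟩
    by_cases hj : j ∈ s
    · have : Nonempty (j ∈ s) := ⟨hj⟩
      right; exact ⟨j, hj, by simp only []; rw [ciSup_const]⟩
    · have : IsEmpty (j ∈ s) := ⟨hj⟩
      left; simp [Real.iSup_of_isEmpty]
  calc g i = ⨆ _ : i ∈ s, g i := by
        have : Nonempty (i ∈ s) := ⟨hi⟩
        exact (ciSup_const).symm
    _ ≤ ⨆ j ∈ s, g j := le_ciSup hbdd i

lemma real_biSup_le {ι : Type*} {g : ι → ℝ} {s : Set ι} {a : ℝ}
    (ha : 0 ≤ a) (h : ∀ j ∈ s, g j ≤ a) : (⨆ j ∈ s, g j) ≤ a :=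
  Real.iSup_le (fun j => Real.iSup_le (fun hj => h j hj) ha) ha


lemma supSeminorm_nonneg {X : Type*} [TopologicalSpace X] (F : Set X) (f : C(X, ℂ)) :
    0 ≤ supSeminorm F f :=
  Real.iSup_nonneg fun _ => Real.iSup_nonneg fun _ => norm_nonneg _

lemma norm_apply_le_supSeminorm {X : Type*} [TopologicalSpace X] {F : Set X}
    (hF : IsCompact F) (f : C(X, ℂ)) {x : X} (hx : x ∈ F) :
    ‖f x‖ ≤ supSeminorm F f := by
  obtain ⟨M, hM⟩ := (hF.image_of_continuousOn (f.continuous.norm.continuousOn)).bddAbove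
  simp only [upperBounds, Set.mem_image, Set.mem_setOf_eq] at hM
  have hM' : ∀ y ∈ F, ‖f y‖ ≤ max M 0 := fun y hy =>
    le_max_of_le_left (hM ⟨y, hy, rfl⟩)
  have hbdd : BddAbove (Set.range fun y => ⨆ _ : y ∈ F, ‖f y‖) := by
    refine ⟨max M 0, ?_⟩
    rintro z ⟨y, rfl⟩
    by_cases hy : y ∈ F
    · have : Nonempty (y ∈ F) := ⟨hy⟩
      simp only []; rw [ciSup_const]; exact hM' y hy
    · have : IsEmpty (y ∈ F) := ⟨hy⟩
      simp only []; rw [Real.iSup_of_isEmpty]; exact le_max_right _ _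
  calc ‖f x‖ = ⨆ _ : x ∈ F, ‖f x‖ := by
        have : Nonempty (x ∈ F) := ⟨hx⟩
        exact (ciSup_const).symm
    _ ≤ supSeminorm F f := le_ciSup hbdd x

lemma supSeminorm_eq_zero {X : Type*} [TopologicalSpace X] {F : Set X} {f : C(X, ℂ)}
    (h : ∀ y ∈ F, f y = 0) : supSeminorm F f ≤ 0 :=
  Real.iSup_le (fun y => Real.iSup_le (fun hy => by simp [h y hy]) le_rfl) le_rfl


lemma char_exists_point {X : Type*} [TopologicalSpace X] {𝓕 : Set (Set X)}
    (hcomp : ∀ F ∈ 𝓕, IsCompact F) {χ : C(X, ℂ) → ℂ}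
    (hχ : χ ∈ characterSpace𝓕 X 𝓕) : ∃ x : X, ∀ f : C(X, ℂ), χ f = f x := by
  obtain ⟨hne, hadd, hsmul, hmul, S, r, hS𝓕, hr, hbound⟩ := hχ
  have hzero : χ 0 = 0 := by
    have := hsmul 0 0
    have h00 : (0 : ℂ) • (0 : C(X, ℂ)) = 0 := by ext y; simp
    rw [h00, zero_mul] at this
    exact this
  obtain ⟨f₀, hf₀⟩ : ∃ f₀, χ f₀ ≠ 0 := by
    by_contra h
    push_neg at h
    exact hne (funext h)
  have h1 : χ 1 = 1 := by
    have : χ f₀ * χ 1 = χ f₀ * 1 := by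
      rw [mul_one, ← hmul, mul_one]
    exact mul_left_cancel₀ hf₀ this
  have hsub : ∀ f g : C(X, ℂ), χ (f - g) = χ f - χ g := by
    intro f g
    have : f - g = f + (-1 : ℂ) • g := by
      ext y
      simp [sub_eq_add_neg]
    rw [this, hadd, hsmul]; ring
  set K : Set X := ⋃ F ∈ (S : Set (Set X)), F with hKdef
  have hK : IsCompact K := S.finite_toSet.isCompact_biUnion fun F hF => hcomp F (hS𝓕 hF)
  have hvanish : ∀ f : C(X, ℂ), (∀ y ∈ K, f y = 0) → χ f = 0 := by
    intro f hf
    have hsup : (⨆ F ∈ (S : Set (Set X)), supSeminorm F f) ≤ 0 :=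
      real_biSup_le le_rfl fun F hF =>
        supSeminorm_eq_zero fun y hy => hf y (Set.mem_biUnion hF hy)
    have := hbound f
    have : ‖χ f‖ ≤ 0 := this.trans (by nlinarith)
    simpa using le_antisymm this (norm_nonneg _)
  by_cases hx : ∃ x ∈ K, ∀ f : C(X, ℂ), χ f = 0 → f x = 0
  · obtain ⟨x, hxK, hxp⟩ := hx
    refine ⟨x, fun f => ?_⟩
    have hg : χ (f - χ f • 1) = 0 := by
      rw [hsub, hsmul, h1, mul_one, sub_self]
    have := hxp _ hg
    simp only [ContinuousMap.sub_apply, ContinuousMap.smul_apply, ContinuousMap.one_apply,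
      smul_eq_mul, mul_one, sub_eq_zero] at this
    exact this.symm
  · exfalso
    push_neg at hx
    rcases Set.eq_empty_or_nonempty K with hKe | hKne
    · exact hf₀ (hvanish f₀ (by simp [hKe]))
    choose φ hφ0 hφne using hx
    set ψ : K → C(X, ℂ) := fun x => φ x.1 x.2 with hψdef
    set U : K → Set X := fun x => {y | ψ x y ≠ 0} with hUdef
    have hUopen : ∀ x, IsOpen (U x) :=
      fun x => isOpen_compl_singleton.preimage (ψ x).continuous
    obtain ⟨t, ht⟩ := hK.elim_finite_subcover U hUopen
      (fun y hy => Set.mem_iUnion.2 ⟨⟨y, hy⟩, hφne y hy⟩)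
    set g : C(X, ℂ) := ∑ x ∈ t, ψ x * star (ψ x) with hgdef
    have hχadd : ∀ (s : Finset ↥K) (F : ↥K → C(X, ℂ)),
        χ (∑ x ∈ s, F x) = ∑ x ∈ s, χ (F x) := by
      intro s F
      classical
      induction s using Finset.induction_on with
      | empty => simpa using hzero
      | insert _ _ hnotmem ih => rw [Finset.sum_insert hnotmem, hadd, ih, Finset.sum_insert hnotmem]
    have hχg : χ g = 0 := by
      rw [hgdef, hχadd]
      refine Finset.sum_eq_zero fun x _ => ?_
      rw [hmul, hφ0, zero_mul]
    set G : X → ℝ := fun y => ∑ x ∈ t, Complex.normSq (ψ x y) with hGdef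
    have hGcont : Continuous G :=
      continuous_finset_sum _ fun x _ => Complex.continuous_normSq.comp (ψ x).continuous
    have hgG : ∀ y, g y = (G y : ℂ) := by
      intro y
      simp only [hgdef, hGdef, ContinuousMap.coe_sum, Finset.sum_apply,
        ContinuousMap.mul_apply, ContinuousMap.star_apply, Complex.star_def,
        Complex.mul_conj, Complex.ofReal_sum]
    have hGpos : ∀ y ∈ K, 0 < G y := by
      intro y hy
      obtain ⟨x, hxt, hxU⟩ := Set.mem_iUnion₂.1 (ht hy)
      exact Finset.sum_pos' (fun i _ => Complex.normSq_nonneg _)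
        ⟨x, hxt, Complex.normSq_pos.2 hxU⟩
    obtain ⟨y₀, hy₀K, hy₀min⟩ := hK.exists_isMinOn hKne hGcont.continuousOn
    set ε : ℝ := G y₀ with hεdef
    have hε : 0 < ε := hGpos y₀ hy₀K
    have hεle : ∀ y ∈ K, ε ≤ G y := fun y hy => hy₀min hy
    set u : C(X, ℝ) := ⟨fun y => max (G y) ε, hGcont.max continuous_const⟩ with hudef
    have hupos : ∀ y, 0 < u y := fun y => lt_max_of_lt_right hε
    set v : C(X, ℂ) := ⟨fun y => ((u y)⁻¹ : ℝ),
      Complex.continuous_ofReal.comp (u.continuous.inv₀ fun y => (hupos y).ne')⟩ with hvdef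
    have hvg1 : ∀ y ∈ K, (v * g - 1) y = 0 := by
      intro y hy
      have huy : u y = G y := max_eq_left (hεle y hy)
      simp only [ContinuousMap.sub_apply, ContinuousMap.mul_apply, ContinuousMap.one_apply,
        hvdef, ContinuousMap.coe_mk, hgG y, huy]
      rw [← Complex.ofReal_mul, inv_mul_cancel₀ (hGpos y hy).ne']
      simp
    have : χ (v * g - 1) = 0 := hvanish _ hvg1
    rw [hsub, hmul, h1, hχg, mul_zero, zero_sub, neg_eq_zero] at this
    exact one_ne_zero this

lemma eval_continuousMap_mem {X : Type*} [TopologicalSpace X] {𝓕 : Set (Set X)}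
    (hcomp : ∀ F ∈ 𝓕, IsCompact F) (hcover : ⋃₀ 𝓕 = Set.univ) (x : X) :
    (fun f : C(X, ℂ) => f x) ∈ characterSpace𝓕 X 𝓕 := by
  have hx : x ∈ ⋃₀ 𝓕 := hcover ▸ Set.mem_univ x
  obtain ⟨F, hF𝓕, hxF⟩ := hx
  refine ⟨?_, fun f g => rfl, fun c f => rfl, fun f g => rfl, {F}, 1, ?_, one_pos, ?_⟩
  · intro h
    have := congrFun h 1
    simp at this
  · simpa using hF𝓕
  · intro f
    rw [one_mul]
    calc ‖f x‖ ≤ supSeminorm F f := norm_apply_le_supSeminorm (hcomp F hF𝓕) f hxF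
      _ ≤ ⨆ F' ∈ ((({F} : Finset (Set X))) : Set (Set X)), supSeminorm F' f :=
        real_le_biSup (fun F' => supSeminorm F' f) (Finset.finite_toSet _)
          (fun F' => supSeminorm_nonneg F' f) (by simp)

/-- Let `X` be a Tychonoff space and `𝓕` a strongly functionally
generating family of compact subsets covering `X`.  Equip `C(X, ℂ)` with the topology of
uniform convergence on members of `𝓕` (with continuity of functionals expressed via
domination by the seminorms `p_F`, `F ∈ 𝓕`).  Then evaluation
`x ↦ (f ↦ f x)` is a homeomorphism from `X` onto the character space
`Δ(C_𝓕(X))` with the weak-* (pointwise convergence) topology. -/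
theorem stmt15 {X : Type*} [TopologicalSpace X] [T2Space X] [CompletelyRegularSpace X]
    (𝓕 : Set (Set X)) (hcomp : ∀ F ∈ 𝓕, IsCompact F) (hcover : ⋃₀ 𝓕 = Set.univ)
    (hgen : ∀ f : X → ℝ, (∀ F ∈ 𝓕, ContinuousOn f F) → Continuous f) :
    ∃ hmem : ∀ x : X, (fun f : C(X, ℂ) => f x) ∈ characterSpace𝓕 X 𝓕,
      IsHomeomorph (fun x : X =>
        (⟨fun f : C(X, ℂ) => f x, hmem x⟩ : characterSpace𝓕 X 𝓕)) := by
  have hmem : ∀ x : X, (fun f : C(X, ℂ) => f x) ∈ characterSpace𝓕 X 𝓕 :=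
    eval_continuousMap_mem hcomp hcover
  refine ⟨hmem, ?_⟩
  set e : X → characterSpace𝓕 X 𝓕 :=
    fun x => (⟨fun f : C(X, ℂ) => f x, hmem x⟩ : characterSpace𝓕 X 𝓕) with hedef
  have hcont : Continuous e :=
    Continuous.subtype_mk (continuous_pi fun f => f.continuous) _
  -- a complex-valued separating function from complete regularity
  have sep : ∀ (x : X) (K : Set X), IsClosed K → x ∉ K →
      ∃ F : C(X, ℂ), F x = 0 ∧ ∀ y ∈ K, F y = 1 := by
    intro x K hK hxK
    obtain ⟨f, hfc, hf0, hf1⟩ := CompletelyRegularSpace.completely_regular x K hK hxK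
    refine ⟨⟨fun z => ((f z : ℝ) : ℂ),
      Complex.continuous_ofReal.comp (continuous_subtype_val.comp hfc)⟩, ?_, ?_⟩
    · simp [hf0]
    · intro y hy
      have : f y = 1 := hf1 hy
      simp [this]
  have hinj : Function.Injective e := by
    intro a b hab
    by_contra hne
    obtain ⟨F, hFa, hFb⟩ := sep a {b} isClosed_singleton (by simpa using hne)
    have h2 : F a = F b := congrFun (congrArg Subtype.val hab) F
    rw [hFa, hFb b rfl] at h2
    exact zero_ne_one h2
  have hind : Topology.IsInducing e := by
    rw [Topology.isInducing_iff_nhds]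
    intro x
    refine le_antisymm (Filter.Tendsto.le_comap (hcont.tendsto x)) ?_
    intro U hU
    obtain ⟨V, hVU, hVopen, hxV⟩ := mem_nhds_iff.1 hU
    obtain ⟨F, hFx, hF1⟩ := sep x Vᶜ hVopen.isClosed_compl (by simp [hxV])
    rw [Filter.mem_comap]
    refine ⟨{φ : characterSpace𝓕 X 𝓕 | ‖φ.1 F‖ < 1 / 2}, ?_, ?_⟩
    · have hopen : IsOpen {φ : characterSpace𝓕 X 𝓕 | ‖φ.1 F‖ < 1 / 2} := by
        have : Continuous fun φ : characterSpace𝓕 X 𝓕 => ‖φ.1 F‖ :=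
          ((continuous_apply F).comp continuous_subtype_val).norm
        exact isOpen_lt this continuous_const
      refine hopen.mem_nhds ?_
      simp only [hedef, Set.mem_setOf_eq, hFx]
      norm_num
    · intro y hy
      simp only [hedef, Set.mem_preimage, Set.mem_setOf_eq] at hy
      refine hVU (by_contra fun hyV => ?_)
      rw [hF1 y hyV] at hy
      norm_num at hy
  have hsurj : Function.Surjective e := by
    intro φ
    obtain ⟨x, hx⟩ := char_exists_point hcomp φ.2
    exact ⟨x, Subtype.ext (funext fun f => (hx f).symm)⟩
  exact isHomeomorph_iff_isEmbedding_surjective.2 ⟨⟨hind, hinj⟩, hsurj⟩
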